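/- At every (x, y, z) ∈ 𝒜, the function f is Fréchet differentiable with derivative (s, t, r) ↦ α·s + β·t + γ·r, i.e., ∂f/∂x = α, ∂f/∂y = β, ∂f/∂z = γ. -/

import Mathlib

open Real

/-- Milnor's Lobachevsky function. -/
noncomputable def Lob (x : ℝ) : ℝ := -∫ t in (0:ℝ)..x, Real.log |2 * Real.sin t|

/-- Angle opposite the side of length `a` in a euclidean triangle with side
lengths `a`, `b`, `c`, given by the arccos formula (which, since `Real.arccos`
clamps, also implements the broken-triangle convention: the angle opposite a
too-long side is `π` and the other two angles are `0`). -/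
noncomputable def eang (a b c : ℝ) : ℝ := Real.arccos ((b^2 + c^2 - a^2) / (2*b*c))

/-- The open domain `𝒜` where `eˣ, e^y, e^z` satisfy the strict triangle
inequalities. -/
def Adom : Set (ℝ × ℝ × ℝ) :=
  {p | Real.exp p.1 < Real.exp p.2.1 + Real.exp p.2.2 ∧
       Real.exp p.2.1 < Real.exp p.2.2 + Real.exp p.1 ∧
       Real.exp p.2.2 < Real.exp p.1 + Real.exp p.2.1}

/-- The triangle function `f(x,y,z) = αx + βy + γz + Л(α) + Л(β) + Л(γ)`
(extended to all of `ℝ³` by the broken-triangle convention). -/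
noncomputable def fTri (p : ℝ × ℝ × ℝ) : ℝ :=
  eang (Real.exp p.1) (Real.exp p.2.1) (Real.exp p.2.2) * p.1 +
  eang (Real.exp p.2.1) (Real.exp p.2.2) (Real.exp p.1) * p.2.1 +
  eang (Real.exp p.2.2) (Real.exp p.1) (Real.exp p.2.1) * p.2.2 +
  Lob (eang (Real.exp p.1) (Real.exp p.2.1) (Real.exp p.2.2)) +
  Lob (eang (Real.exp p.2.1) (Real.exp p.2.2) (Real.exp p.1)) +
  Lob (eang (Real.exp p.2.2) (Real.exp p.1) (Real.exp p.2.1))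

/-! ### Auxiliary lemmas -/

/-- The Heron polynomial `16·Area²`. -/
def Qh (a b c : ℝ) : ℝ := 2*a^2*b^2 + 2*b^2*c^2 + 2*c^2*a^2 - a^4 - b^4 - c^4

lemma Qh_symm (a b c : ℝ) : Qh b c a = Qh a b c := by unfold Qh; ring

lemma Qh_pos {a b c : ℝ} (ha : 0 < a) (hb : 0 < b) (hc : 0 < c)
    (h1 : a < b + c) (h2 : b < c + a) (h3 : c < a + b) : 0 < Qh a b c := by
  have h : Qh a b c = (a+b+c) * ((b+c)-a) * ((c+a)-b) * ((a+b)-c) := by unfold Qh; ring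
  rw [h]
  have : (0:ℝ) < a + b + c := by linarith
  have : (0:ℝ) < (b+c)-a := by linarith
  have : (0:ℝ) < (c+a)-b := by linarith
  have : (0:ℝ) < (a+b)-c := by linarith
  positivity

lemma cos_bounds {a b c : ℝ} (ha : 0 < a) (hb : 0 < b) (hc : 0 < c)
    (h1 : a < b + c) (h2 : b < c + a) (h3 : c < a + b) :
    -1 < (b^2 + c^2 - a^2) / (2*b*c) ∧ (b^2 + c^2 - a^2) / (2*b*c) < 1 := by
  have hbc : (0:ℝ) < 2*b*c := by positivity
  constructor
  · rw [lt_div_iff₀ hbc]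
    nlinarith [mul_pos (show (0:ℝ) < b+c-a by linarith) (show (0:ℝ) < a+b+c by linarith)]
  · rw [div_lt_one hbc]
    nlinarith [mul_pos (show (0:ℝ) < c+a-b by linarith) (show (0:ℝ) < a+b-c by linarith)]

lemma sin_eang {a b c : ℝ} (ha : 0 < a) (hb : 0 < b) (hc : 0 < c)
    (h1 : a < b + c) (h2 : b < c + a) (h3 : c < a + b) :
    Real.sin (eang a b c) = Real.sqrt (Qh a b c) / (2*b*c) := by
  rw [eang, Real.sin_arccos]
  have hQ : (0:ℝ) ≤ Qh a b c := (Qh_pos ha hb hc h1 h2 h3).le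
  have h4 : (1:ℝ) - ((b^2+c^2-a^2)/(2*b*c))^2 = Qh a b c * (1/(2*b*c))^2 := by
    unfold Qh; field_simp; ring
  rw [h4, Real.sqrt_mul hQ, Real.sqrt_sq (by positivity : (0:ℝ) ≤ 1/(2*b*c))]
  ring

lemma eang_pos {a b c : ℝ} (ha : 0 < a) (hb : 0 < b) (hc : 0 < c)
    (h1 : a < b + c) (h2 : b < c + a) (h3 : c < a + b) : 0 < eang a b c :=
  Real.arccos_pos.mpr (cos_bounds ha hb hc h1 h2 h3).2

lemma eang_lt_pi {a b c : ℝ} (ha : 0 < a) (hb : 0 < b) (hc : 0 < c)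
    (h1 : a < b + c) (h2 : b < c + a) (h3 : c < a + b) : eang a b c < π := by
  have h := (cos_bounds ha hb hc h1 h2 h3).1
  have h2' : 0 < Real.arccos (-((b^2+c^2-a^2)/(2*b*c))) :=
    Real.arccos_pos.mpr (by linarith)
  rw [Real.arccos_neg] at h2'
  unfold eang; linarith

lemma eang_sum {a b c : ℝ} (ha : 0 < a) (hb : 0 < b) (hc : 0 < c)
    (h1 : a < b + c) (h2 : b < c + a) (h3 : c < a + b) :
    eang a b c + eang b c a + eang c a b = π := by
  set u := (b^2 + c^2 - a^2) / (2*b*c) with hu_def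
  set v := (c^2 + a^2 - b^2) / (2*c*a) with hv_def
  set w := (a^2 + b^2 - c^2) / (2*a*b) with hw_def
  have hu : -1 < u ∧ u < 1 := cos_bounds ha hb hc h1 h2 h3
  have hv : -1 < v ∧ v < 1 := cos_bounds hb hc ha h2 h3 h1
  have hw : -1 < w ∧ w < 1 := cos_bounds hc ha hb h3 h1 h2
  have hαβ_lt : eang a b c + eang b c a < π := by
    have huv : -v < u := by
      have key : u + v = ((a+b) * ((c+a)-b) * ((b+c)-a)) / (2*a*b*c) := by
        rw [hu_def, hv_def]; field_simp; ring
      have e1 : (0:ℝ) < a+b := by linarith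
      have e2 : (0:ℝ) < (c+a)-b := by linarith
      have e3 : (0:ℝ) < (b+c)-a := by linarith
      have hpos : 0 < u + v := by
        rw [key]; exact div_pos (mul_pos (mul_pos e1 e2) e3) (by positivity)
      linarith
    have hmono := Real.strictAntiOn_arccos
      (Set.mem_Icc.mpr ⟨by linarith [hv.2], by linarith [hv.1]⟩)
      (Set.mem_Icc.mpr ⟨hu.1.le, hu.2.le⟩) huv
    rw [Real.arccos_neg] at hmono
    unfold eang; linarith
  have hαβ_nonneg : 0 ≤ eang a b c + eang b c a := by
    have g1 := Real.arccos_nonneg u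
    have g2 := Real.arccos_nonneg v
    unfold eang; linarith
  have hQ := Qh_pos ha hb hc h1 h2 h3
  have hw_eq : w = Real.cos (π - (eang a b c + eang b c a)) := by
    rw [Real.cos_pi_sub, Real.cos_add]
    rw [show Real.cos (eang a b c) = u from Real.cos_arccos hu.1.le hu.2.le,
        show Real.cos (eang b c a) = v from Real.cos_arccos hv.1.le hv.2.le,
        sin_eang ha hb hc h1 h2 h3, sin_eang hb hc ha h2 h3 h1, Qh_symm a b c]
    have hsq : Real.sqrt (Qh a b c) * Real.sqrt (Qh a b c) = Qh a b c :=
      Real.mul_self_sqrt hQ.le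
    rw [show Real.sqrt (Qh a b c)/(2*b*c) * (Real.sqrt (Qh a b c)/(2*c*a))
          = Qh a b c / ((2*b*c)*(2*c*a)) by rw [div_mul_div_comm, hsq]]
    rw [hw_def, hu_def, hv_def]
    unfold Qh
    field_simp
    ring
  have hfin : eang c a b = π - (eang a b c + eang b c a) := by
    unfold eang
    rw [show (a^2 + b^2 - c^2) / (2*a*b) = w from rfl, hw_eq,
        Real.arccos_cos (by linarith) (by linarith)]
    rfl
  linarith

lemma log_sub_log_two_sin {a b c : ℝ} (ha : 0 < a) (hb : 0 < b) (hc : 0 < c)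
    (h1 : a < b + c) (h2 : b < c + a) (h3 : c < a + b) :
    Real.log a - Real.log (2 * Real.sin (eang a b c)) =
      Real.log (a*b*c) - Real.log (Real.sqrt (Qh a b c)) := by
  have hQ := Qh_pos ha hb hc h1 h2 h3
  have hsQ : 0 < Real.sqrt (Qh a b c) := Real.sqrt_pos.mpr hQ
  rw [sin_eang ha hb hc h1 h2 h3]
  rw [show 2 * (Real.sqrt (Qh a b c) / (2*b*c)) = Real.sqrt (Qh a b c) / (b*c) by ring]
  rw [Real.log_div hsQ.ne' (by positivity), Real.log_mul hb.ne' hc.ne',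
      Real.log_mul (by positivity : (a*b:ℝ) ≠ 0) hc.ne', Real.log_mul ha.ne' hb.ne']
  ring

/-! ### Integrability of `log |2 sin|` -/

lemma intervalIntegrable_log01 : IntervalIntegrable Real.log MeasureTheory.volume 0 1 := by
  have h : IntervalIntegrable (fun t : ℝ => -Real.log t) MeasureTheory.volume 0 1 := by
    apply intervalIntegral.intervalIntegrable_deriv_of_nonneg
      (g := fun t : ℝ => t - t * Real.log t)
    · exact (continuous_id.sub Real.continuous_mul_log).continuousOn
    · intro x hx
      rw [show min (0:ℝ) 1 = 0 by norm_num, show max (0:ℝ) 1 = 1 by norm_num] at hx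
      have hx0 : x ≠ 0 := ne_of_gt hx.1
      have := (hasDerivAt_id x).sub (Real.hasDerivAt_mul_log hx0)
      rw [show (1:ℝ) - (Real.log x + 1) = -Real.log x by ring] at this; exact this
    · intro x hx
      rw [show min (0:ℝ) 1 = 0 by norm_num, show max (0:ℝ) 1 = 1 by norm_num] at hx
      have : Real.log x ≤ 0 := Real.log_nonpos hx.1.le hx.2.le
      linarith
  have h2 := h.neg
  have he : (-fun t : ℝ => -Real.log t) = Real.log := by funext t; simp
  rwa [he] at h2

lemma intervalIntegrable_log_to (θ : ℝ) (hθ : 0 < θ) :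
    IntervalIntegrable Real.log MeasureTheory.volume 0 θ := by
  rcases le_total θ 1 with h | h
  · exact intervalIntegrable_log01.mono_set
      (Set.uIcc_subset_uIcc (by simp) (by rw [Set.mem_uIcc]; left; exact ⟨hθ.le, h⟩))
  · exact intervalIntegrable_log01.trans
      (intervalIntegral.intervalIntegrable_log (by rw [Set.uIcc_of_le h]; simp))

lemma measurable_log_two_sin : Measurable (fun t : ℝ => Real.log |2 * Real.sin t|) :=
  Real.measurable_log.comp (continuous_abs.comp (continuous_const.mul Real.continuous_sin)).measurable

lemma logsin_integrable {θ : ℝ} (h0 : 0 < θ) (hπ : θ < π) :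
    IntervalIntegrable (fun t : ℝ => Real.log |2 * Real.sin t|) MeasureTheory.volume 0 θ := by
  set c : ℝ := Real.sin θ / θ with hc_def
  have hsθ : 0 < Real.sin θ := Real.sin_pos_of_pos_of_lt_pi h0 hπ
  have hc : 0 < c := by positivity
  have hlog := intervalIntegrable_log_to θ h0
  have hg : IntervalIntegrable
      (fun t : ℝ => |Real.log (2*c) + Real.log t| + |Real.log 2 + Real.log t|)
      MeasureTheory.volume 0 θ :=
    (((intervalIntegrable_const (c := Real.log (2*c))).add hlog).abs).add
      (((intervalIntegrable_const (c := Real.log 2)).add hlog).abs)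
  apply hg.mono_fun' measurable_log_two_sin.aestronglyMeasurable.restrict
  rw [Set.uIoc_of_le h0.le]
  filter_upwards [MeasureTheory.ae_restrict_mem measurableSet_Ioc] with t ht
  obtain ⟨ht0, htθ⟩ := ht
  have hsin_pos : 0 < Real.sin t := Real.sin_pos_of_pos_of_lt_pi ht0 (lt_of_le_of_lt htθ hπ)
  have hsin_le : Real.sin t ≤ t := Real.sin_le ht0.le
  have hsin_ge : c * t ≤ Real.sin t := by
    have hmem0 : (0:ℝ) ∈ Set.Icc (0:ℝ) π := by exact ⟨le_rfl, Real.pi_pos.le⟩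
    have hmemθ : θ ∈ Set.Icc (0:ℝ) π := ⟨h0.le, hπ.le⟩
    have ha' : (0:ℝ) ≤ 1 - t/θ := by
      have : t/θ ≤ 1 := (div_le_one h0).mpr htθ
      linarith
    have hb' : (0:ℝ) ≤ t/θ := by positivity
    have := strictConcaveOn_sin_Icc.concaveOn.2 hmem0 hmemθ ha' hb' (by ring)
    simp only [smul_eq_mul, Real.sin_zero, mul_zero, zero_add] at this
    calc c * t = (t/θ) * Real.sin θ := by rw [hc_def]; field_simp
    _ ≤ Real.sin ((1 - t/θ) * 0 + (t/θ) * θ) := by simpa using this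
    _ = Real.sin t := by congr 1; field_simp; ring
  have habs : |2 * Real.sin t| = 2 * Real.sin t := abs_of_pos (by positivity)
  have hlow : Real.log (2*c) + Real.log t ≤ Real.log (2 * Real.sin t) := by
    rw [← Real.log_mul (by positivity) ht0.ne']
    apply Real.log_le_log (by positivity)
    nlinarith
  have hhigh : Real.log (2 * Real.sin t) ≤ Real.log 2 + Real.log t := by
    rw [← Real.log_mul (by norm_num) ht0.ne']
    apply Real.log_le_log (by positivity)
    nlinarith
  rw [habs]
  have h1 := neg_abs_le (Real.log (2*c) + Real.log t)
  have h2 := le_abs_self (Real.log 2 + Real.log t)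
  have h3 := abs_nonneg (Real.log (2*c) + Real.log t)
  have h4 := abs_nonneg (Real.log 2 + Real.log t)
  rw [Real.norm_eq_abs, abs_le]
  constructor <;> linarith

lemma lob_hasDerivAt {θ : ℝ} (h0 : 0 < θ) (hπ : θ < π) :
    HasDerivAt Lob (-Real.log (2 * Real.sin θ)) θ := by
  have hsθ : 0 < Real.sin θ := Real.sin_pos_of_pos_of_lt_pi h0 hπ
  have hint := logsin_integrable h0 hπ
  have hcont : ContinuousAt (fun t : ℝ => Real.log |2 * Real.sin t|) θ := by
    apply (Real.continuousAt_log ?_).comp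
      ((continuous_abs.comp (continuous_const.mul Real.continuous_sin)).continuousAt)
    simp only [Function.comp_apply]
    rw [abs_ne_zero]; exact mul_ne_zero two_ne_zero hsθ.ne'
  have h := intervalIntegral.integral_hasDerivAt_right hint
    measurable_log_two_sin.aestronglyMeasurable.stronglyMeasurableAtFilter hcont
  have h2 := h.neg
  have : Real.log |2 * Real.sin θ| = Real.log (2 * Real.sin θ) := by
    rw [abs_of_pos (by positivity)]
  rw [this] at h2
  exact h2

/-- At every point of `𝒜`, `f` is Fréchet differentiable with derivative
`(s,t,r) ↦ α·s + β·t + γ·r`. -/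
theorem fTri_hasFDerivAt (p : ℝ × ℝ × ℝ) (hp : p ∈ Adom) :
    ∃ L : ℝ × ℝ × ℝ →L[ℝ] ℝ, HasFDerivAt fTri L p ∧
      ∀ s t r : ℝ, L (s, t, r) =
        eang (Real.exp p.1) (Real.exp p.2.1) (Real.exp p.2.2) * s +
        eang (Real.exp p.2.1) (Real.exp p.2.2) (Real.exp p.1) * t +
        eang (Real.exp p.2.2) (Real.exp p.1) (Real.exp p.2.1) * r := by
  have hpmem := hp
  obtain ⟨h1, h2, h3⟩ := hp
  have ha : (0:ℝ) < Real.exp p.1 := Real.exp_pos _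
  have hb : (0:ℝ) < Real.exp p.2.1 := Real.exp_pos _
  have hc : (0:ℝ) < Real.exp p.2.2 := Real.exp_pos _
  set A : ℝ × ℝ × ℝ → ℝ :=
    fun q => eang (Real.exp q.1) (Real.exp q.2.1) (Real.exp q.2.2) with hA_def
  set B : ℝ × ℝ × ℝ → ℝ :=
    fun q => eang (Real.exp q.2.1) (Real.exp q.2.2) (Real.exp q.1) with hB_def
  set C : ℝ × ℝ × ℝ → ℝ :=
    fun q => eang (Real.exp q.2.2) (Real.exp q.1) (Real.exp q.2.1) with hC_def
  -- differentiability of the angle functions at p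
  have hdA : DifferentiableAt ℝ A p := by
    have hbnd := cos_bounds ha hb hc h1 h2 h3
    have hinner : DifferentiableAt ℝ (fun q : ℝ×ℝ×ℝ =>
        ((Real.exp q.2.1)^2 + (Real.exp q.2.2)^2 - (Real.exp q.1)^2) /
          (2 * Real.exp q.2.1 * Real.exp q.2.2)) p := by
      simp only [div_eq_mul_inv]
      exact ((((differentiableAt_snd.fst.exp).pow 2).add
          ((differentiableAt_snd.snd.exp).pow 2)).sub ((differentiableAt_fst.exp).pow 2)).mul
        (((((differentiableAt_const (2:ℝ)).mul differentiableAt_snd.fst.exp).mul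
          differentiableAt_snd.snd.exp)).inv (by simp only [Pi.mul_apply]; positivity))
    exact ((Real.hasDerivAt_arccos hbnd.1.ne' hbnd.2.ne).differentiableAt).comp p hinner
  have hdB : DifferentiableAt ℝ B p := by
    have hbnd := cos_bounds hb hc ha h2 h3 h1
    have hinner : DifferentiableAt ℝ (fun q : ℝ×ℝ×ℝ =>
        ((Real.exp q.2.2)^2 + (Real.exp q.1)^2 - (Real.exp q.2.1)^2) /
          (2 * Real.exp q.2.2 * Real.exp q.1)) p := by
      simp only [div_eq_mul_inv]
      exact ((((differentiableAt_snd.snd.exp).pow 2).add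
          ((differentiableAt_fst.exp).pow 2)).sub ((differentiableAt_snd.fst.exp).pow 2)).mul
        (((((differentiableAt_const (2:ℝ)).mul differentiableAt_snd.snd.exp).mul
          differentiableAt_fst.exp)).inv (by simp only [Pi.mul_apply]; positivity))
    exact ((Real.hasDerivAt_arccos hbnd.1.ne' hbnd.2.ne).differentiableAt).comp p hinner
  have hdC : DifferentiableAt ℝ C p := by
    have hbnd := cos_bounds hc ha hb h3 h1 h2
    have hinner : DifferentiableAt ℝ (fun q : ℝ×ℝ×ℝ =>
        ((Real.exp q.1)^2 + (Real.exp q.2.1)^2 - (Real.exp q.2.2)^2) /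
          (2 * Real.exp q.1 * Real.exp q.2.1)) p := by
      simp only [div_eq_mul_inv]
      exact ((((differentiableAt_fst.exp).pow 2).add
          ((differentiableAt_snd.fst.exp).pow 2)).sub ((differentiableAt_snd.snd.exp).pow 2)).mul
        (((((differentiableAt_const (2:ℝ)).mul differentiableAt_fst.exp).mul
          differentiableAt_snd.fst.exp)).inv (by simp only [Pi.mul_apply]; positivity))
    exact ((Real.hasDerivAt_arccos hbnd.1.ne' hbnd.2.ne).differentiableAt).comp p hinner
  have hA : HasFDerivAt A (fderiv ℝ A p) p := hdA.hasFDerivAt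
  have hB : HasFDerivAt B (fderiv ℝ B p) p := hdB.hasFDerivAt
  have hC : HasFDerivAt C (fderiv ℝ C p) p := hdC.hasFDerivAt
  set Da := fderiv ℝ A p
  set Db := fderiv ℝ B p
  set Dc := fderiv ℝ C p
  -- the sum of the three angle functions is constant (= π) near p
  have hopen : IsOpen Adom := by
    have e : Adom = {q : ℝ×ℝ×ℝ | Real.exp q.1 < Real.exp q.2.1 + Real.exp q.2.2} ∩
        ({q : ℝ×ℝ×ℝ | Real.exp q.2.1 < Real.exp q.2.2 + Real.exp q.1} ∩
         {q : ℝ×ℝ×ℝ | Real.exp q.2.2 < Real.exp q.1 + Real.exp q.2.1}) := rfl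
    rw [e]
    have c1 : Continuous fun q : ℝ×ℝ×ℝ => Real.exp q.1 := by fun_prop
    have c2 : Continuous fun q : ℝ×ℝ×ℝ => Real.exp q.2.1 := by fun_prop
    have c3 : Continuous fun q : ℝ×ℝ×ℝ => Real.exp q.2.2 := by fun_prop
    exact (isOpen_lt c1 (c2.add c3)).inter
      ((isOpen_lt c2 (c3.add c1)).inter (isOpen_lt c3 (c1.add c2)))
  have hconst : HasFDerivAt (fun q : ℝ×ℝ×ℝ => A q + B q + C q) (0 : ℝ×ℝ×ℝ →L[ℝ] ℝ) p := by
    have hev : (fun q : ℝ×ℝ×ℝ => A q + B q + C q) =ᶠ[nhds p] (fun _ => π) := by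
      filter_upwards [hopen.mem_nhds hpmem] with q hq
      exact eang_sum (Real.exp_pos _) (Real.exp_pos _) (Real.exp_pos _) hq.1 hq.2.1 hq.2.2
    exact (hasFDerivAt_const π p).congr_of_eventuallyEq hev
  have hsum0 : Da + Db + Dc = 0 := ((hA.add hB).add hC).unique hconst
  -- the angles at p lie in (0, π)
  have hapos : 0 < A p := eang_pos ha hb hc h1 h2 h3
  have halt : A p < π := eang_lt_pi ha hb hc h1 h2 h3
  have hbpos : 0 < B p := eang_pos hb hc ha h2 h3 h1
  have hblt : B p < π := eang_lt_pi hb hc ha h2 h3 h1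
  have hcpos : 0 < C p := eang_pos hc ha hb h3 h1 h2
  have hclt : C p < π := eang_lt_pi hc ha hb h3 h1 h2
  -- derivatives of the Lobachevsky terms
  have hLA := (lob_hasDerivAt hapos halt).comp_hasFDerivAt p hA
  have hLB := (lob_hasDerivAt hbpos hblt).comp_hasFDerivAt p hB
  have hLC := (lob_hasDerivAt hcpos hclt).comp_hasFDerivAt p hC
  -- derivatives of the coordinate functions
  have hc1 : HasFDerivAt (fun q : ℝ×ℝ×ℝ => q.1)
      (ContinuousLinearMap.fst ℝ ℝ (ℝ×ℝ)) p := hasFDerivAt_fst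
  have hc2 : HasFDerivAt (fun q : ℝ×ℝ×ℝ => q.2.1)
      ((ContinuousLinearMap.fst ℝ ℝ ℝ).comp (ContinuousLinearMap.snd ℝ ℝ (ℝ×ℝ))) p :=
    hasFDerivAt_fst.comp p hasFDerivAt_snd
  have hc3 : HasFDerivAt (fun q : ℝ×ℝ×ℝ => q.2.2)
      ((ContinuousLinearMap.snd ℝ ℝ ℝ).comp (ContinuousLinearMap.snd ℝ ℝ (ℝ×ℝ))) p :=
    hasFDerivAt_snd.comp p hasFDerivAt_snd
  have ht1 := hA.mul hc1
  have ht2 := hB.mul hc2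
  have ht3 := hC.mul hc3
  have htotal := ((((ht1.add ht2).add ht3).add hLA).add hLB).add hLC
  refine ⟨_, htotal, ?_⟩
  intro s t r
  have hval : (Da + Db + Dc) (s, t, r) = 0 := by rw [hsum0]; rfl
  simp only [ContinuousLinearMap.add_apply, ContinuousLinearMap.zero_apply] at hval
  -- the law-of-sines identities
  have hKa : p.1 - Real.log (2 * Real.sin (A p)) =
      Real.log (Real.exp p.1 * Real.exp p.2.1 * Real.exp p.2.2) -
        Real.log (Real.sqrt (Qh (Real.exp p.1) (Real.exp p.2.1) (Real.exp p.2.2))) := by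
    have h' := log_sub_log_two_sin ha hb hc h1 h2 h3
    rwa [Real.log_exp] at h'
  have hKb : p.2.1 - Real.log (2 * Real.sin (B p)) =
      Real.log (Real.exp p.1 * Real.exp p.2.1 * Real.exp p.2.2) -
        Real.log (Real.sqrt (Qh (Real.exp p.1) (Real.exp p.2.1) (Real.exp p.2.2))) := by
    have h' := log_sub_log_two_sin hb hc ha h2 h3 h1
    rwa [Real.log_exp, Qh_symm (Real.exp p.1) (Real.exp p.2.1) (Real.exp p.2.2),
      show Real.exp p.2.1 * Real.exp p.2.2 * Real.exp p.1
          = Real.exp p.1 * Real.exp p.2.1 * Real.exp p.2.2 by ring] at h'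
  have hKc : p.2.2 - Real.log (2 * Real.sin (C p)) =
      Real.log (Real.exp p.1 * Real.exp p.2.1 * Real.exp p.2.2) -
        Real.log (Real.sqrt (Qh (Real.exp p.1) (Real.exp p.2.1) (Real.exp p.2.2))) := by
    have h' := log_sub_log_two_sin hc ha hb h3 h1 h2
    rwa [Real.log_exp, Qh_symm (Real.exp p.2.1) (Real.exp p.2.2) (Real.exp p.1),
      Qh_symm (Real.exp p.1) (Real.exp p.2.1) (Real.exp p.2.2),
      show Real.exp p.2.2 * Real.exp p.1 * Real.exp p.2.1
          = Real.exp p.1 * Real.exp p.2.1 * Real.exp p.2.2 by ring] at h'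
  simp only [ContinuousLinearMap.add_apply, ContinuousLinearMap.coe_smul', Pi.smul_apply,
    smul_eq_mul, ContinuousLinearMap.coe_comp', Function.comp_apply,
    ContinuousLinearMap.coe_fst', ContinuousLinearMap.coe_snd']
  linear_combination (Da (s, t, r)) * hKa + (Db (s, t, r)) * hKb + (Dc (s, t, r)) * hKc +
    (Real.log (Real.exp p.1 * Real.exp p.2.1 * Real.exp p.2.2) -
      Real.log (Real.sqrt (Qh (Real.exp p.1) (Real.exp p.2.1) (Real.exp p.2.2)))) * hval
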